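/- Let A be a unital complex Banach algebra and let δ : A → A be a continuous linear derivation, i.e. δ(xy) = δ(x)y + xδ(y) for all x, y ∈ A. Then for every b ∈ A one has δ(exp(b)) = ∫₀¹ exp(t·b)·δ(b)·exp((1−t)·b) dt, where the integral is a Bochner integral in A. In particular, for a ∈ A and s ∈ ℂ, δ(exp(sa)) = s·∫₀¹ exp(tsa)·δ(a)·exp((1−t)sa) dt. -/

import Mathlib

open NormedSpace

/-- For a continuous linear derivation `δ` on a unital complex Banach algebra `A`, one has
`δ(exp b) = ∫₀¹ exp(t b) δ(b) exp((1−t) b) dt` for every `b ∈ A`; in particular, for `a ∈ A`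
and `s ∈ ℂ`, `δ(exp(s a)) = s ∫₀¹ exp(t s a) δ(a) exp((1−t) s a) dt`. -/
theorem derivation_exp_integral {A : Type*} [NormedRing A] [NormedAlgebra ℂ A]
    [CompleteSpace A] (δ : A →L[ℂ] A)
    (hδ : ∀ x y : A, δ (x * y) = δ x * y + x * δ y) :
    (∀ b : A, δ (exp b) = ∫ t in (0:ℝ)..1, exp (t • b) * δ b * exp ((1 - t) • b)) ∧
    (∀ (a : A) (s : ℂ), δ (exp (s • a)) =
      s • ∫ t in (0:ℝ)..1,
        exp (((t : ℂ) * s) • a) * δ a * exp (((1 - (t : ℂ)) * s) • a)) := by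
  let +nondep : NormedAlgebra ℚ A := .restrictScalars ℚ ℂ A
  have hexp : (exp : A → A) = exp := rfl
  have hδ1 : δ (1 : A) = 0 := by
    have h1 := hδ 1 1
    simp only [mul_one, one_mul] at h1
    exact (left_eq_add.mp h1)
  have key : ∀ b : A, δ (exp b) =
      ∫ t in (0:ℝ)..1, exp (t • b) * δ b * exp ((1 - t) • b) := by
    intro b
    set E : ℝ → A := fun t => exp (t • b) with hE_def
    set N : ℝ → A := fun t => exp (t • (-b)) with hN_def
    have hE : ∀ t : ℝ, HasDerivAt E (E t * b) t := by
      intro t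
      have := hasDerivAt_exp_smul_const (𝕂 := ℝ) b t
      exact this
    have hN : ∀ t : ℝ, HasDerivAt N (N t * (-b)) t := by
      intro t
      have := hasDerivAt_exp_smul_const (𝕂 := ℝ) (-b) t
      exact this
    have hcommNb : ∀ t : ℝ, Commute (N t) b := by
      intro t
      exact (((Commute.refl b).neg_left).smul_left t).exp_left
    have hF : ∀ t : ℝ, HasDerivAt (fun t => δ (E t) * N t) (E t * δ b * N t) t := by
      intro t
      have h1 : HasDerivAt (fun t => δ (E t)) (δ (E t * b)) t := by
        exact ((δ.restrictScalars ℝ).hasFDerivAt (x := E t)).comp_hasDerivAt t (hE t)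
      have h2 := h1.mul (hN t)
      convert h2 using 1
      · rfl
      rw [hδ]
      have hc : N t * b = b * N t := (hcommNb t)
      rw [mul_neg, hc]
      noncomm_ring
    have hcontE : Continuous E := by
      exact exp_continuous.comp (continuous_id.smul continuous_const)
    have hcontN : Continuous N := by
      exact exp_continuous.comp (continuous_id.smul continuous_const)
    have hInt : IntervalIntegrable (fun t => E t * δ b * N t) MeasureTheory.volume 0 1 :=
      ((hcontE.mul continuous_const).mul hcontN).intervalIntegrable 0 1
    have hFTC := intervalIntegral.integral_eq_sub_of_hasDerivAt
      (f := fun t => δ (E t) * N t) (fun t _ => hF t) hInt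
    have hF0 : δ (E 0) * N 0 = 0 := by
      simp [hE_def, hN_def, exp_zero, hδ1]
    have hF1 : δ (E 1) * N 1 = δ (exp b) * exp (-b) := by
      simp [hE_def, hN_def]
    simp only [hF0, hF1, sub_zero] at hFTC
    -- multiply on the right by exp b
    have hNE : ∀ t : ℝ, N t * exp b = exp ((1 - t) • b) := by
      intro t
      rw [← exp_add_of_commute (((Commute.refl b).neg_left).smul_left t)]
      congr 1
      rw [smul_neg, sub_smul, one_smul]
      abel
    have hinv : exp (-b) * exp b = 1 := by
      rw [← exp_add_of_commute ((Commute.refl b).neg_left), neg_add_cancel, exp_zero]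
    set L : A →L[ℂ] A := (ContinuousLinearMap.mul ℂ A).flip (exp b) with hL
    have hLint := L.intervalIntegral_comp_comm hInt
    simp only [hL, ContinuousLinearMap.flip_apply, ContinuousLinearMap.mul_apply'] at hLint
    rw [hFTC] at hLint
    rw [mul_assoc, hinv, mul_one] at hLint
    rw [← hLint]
    apply intervalIntegral.integral_congr
    intro t _
    show (E t * δ b * N t) * exp b = exp (t • b) * δ b * exp ((1 - t) • b)
    rw [mul_assoc (E t * δ b), hNE t]
  constructor
  · exact key
  · intro a s
    have h := key (s • a)
    rw [h, map_smul]
    rw [← intervalIntegral.integral_smul]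
    apply intervalIntegral.integral_congr
    intro t _
    have h1 : t • (s • a) = ((t : ℂ) * s) • a := by
      rw [← smul_assoc, Complex.real_smul]
    have h2 : (1 - t) • (s • a) = ((1 - (t : ℂ)) * s) • a := by
      rw [← smul_assoc, Complex.real_smul]
      push_cast
      ring_nf
    simp only [h1, h2, smul_mul_assoc, mul_smul_comm]
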